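/- Let z ∈ F_∞ and n a positive integer. The following are equivalent: (a) the set of FPF-visible descents of z is exactly {n}; (b) the FPF-involution code ĉ_FPF(z) has the form (0, c₂, …, c_n, 0, 0, …) where c₂ ≤ c₃ ≤ ⋯ ≤ c_n and c_n ≠ 0; (c) the essential set Ess(D̂_FPF(z)) is nonempty and contained in {(n,j) : j a positive integer}; (d) β_min(z) is n-Grassmannian. -/

import Mathlib

open Equiv

noncomputable section

/-- The function underlying the permutation `Θ : i ↦ i - (-1)^i` of `ℤ`. -/
def thetaFun (i : ℤ) : ℤ := if Even i then i - 1 else i + 1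

theorem thetaFun_invol : Function.Involutive thetaFun := by
  intro i
  unfold thetaFun
  by_cases h : Even i
  · have h1 : ¬ Even (i - 1) := by simp [Int.even_sub_one, h]
    simp [h, h1]
  · have h1 : Even (i + 1) := Int.even_add_one.mpr h
    simp [h, h1]

/-- The permutation `Θ` of `ℤ`, interchanging `2k-1` and `2k` for every integer `k`. -/
def Theta : Equiv.Perm ℤ := thetaFun_invol.toPerm

/-- `F_ℤ`: the fixed-point-free involutions of `ℤ` agreeing with `Θ` outside a finite set. -/
def FZ : Set (Equiv.Perm ℤ) :=
  {z | z * z = 1 ∧ (∀ i : ℤ, z i ≠ i) ∧ {i : ℤ | z i ≠ Theta i}.Finite}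

/-- The set of inversions `Inv(w) = {(i,j) : i < j, w(i) > w(j)}`. -/
def InvSet (w : Equiv.Perm ℤ) : Set (ℤ × ℤ) := {p | p.1 < p.2 ∧ w p.2 < w p.1}

/-- `Cyc_ℤ(w) = {(i,j) : i < j, w(i) = j}`. -/
def CycSet (w : Equiv.Perm ℤ) : Set (ℤ × ℤ) := {p | p.1 < p.2 ∧ w p.1 = p.2}

/-- `ℓ̂_FPF(w) = |Inv(w) ∖ Cyc_ℤ(w)| / 2`. -/
def fpfLen (w : Equiv.Perm ℤ) : ℕ := ((InvSet w) \ (CycSet w)).ncard / 2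

/-- `(i,j)` is an FPF-visible inversion of `z`: `i < j` and `z(j) < min{i, z(i)}`. -/
def FpfVisInv (z : Equiv.Perm ℤ) (i j : ℤ) : Prop := i < j ∧ z j < min i (z i)

/-- `i` is an FPF-visible descent of `z`. -/
def FpfVisDes (z : Equiv.Perm ℤ) (i : ℤ) : Prop := FpfVisInv z i (i + 1)

/-- `i` is a visible descent of an involution `f` of `ℤ`: `f(i+1) ≤ min{i, f(i)}`. -/
def VisDes (f : ℤ → ℤ) (i : ℤ) : Prop := f (i + 1) ≤ min i (f i)

/-- `(q,r)` is the lexicographically maximal FPF-visible inversion of `z`. -/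
def IsMaxVisInv (z : Equiv.Perm ℤ) (q r : ℤ) : Prop :=
  FpfVisInv z q r ∧ ∀ a b : ℤ, FpfVisInv z a b → a < q ∨ (a = q ∧ b ≤ r)

/-- `S_∞`: permutations of `ℤ` whose support is a finite set of positive integers. -/
def SInf : Set (Equiv.Perm ℤ) := {w | {i : ℤ | w i ≠ i}.Finite ∧ ∀ i : ℤ, w i ≠ i → 0 < i}

/-- The Coxeter length of `w ∈ S_∞`: the number of inversions. -/
def lenZ (w : Equiv.Perm ℤ) : ℕ := (InvSet w).ncard

/-- `F_∞`: the elements of `F_ℤ` agreeing with `Θ` on all `i ≤ 0`. -/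
def FInf : Set (Equiv.Perm ℤ) := {z | z ∈ FZ ∧ ∀ i : ℤ, i ≤ 0 → z i = Theta i}

/-- `A_FPF(z)`: the elements `w ∈ S_∞` of minimal Coxeter length with `z = w⁻¹ Θ w`. -/
def AFPF (z : Equiv.Perm ℤ) : Set (Equiv.Perm ℤ) :=
  {w | w ∈ SInf ∧ z = w⁻¹ * Theta * w ∧
    ∀ v ∈ SInf, z = v⁻¹ * Theta * v → lenZ w ≤ lenZ v}

/-- `w = β_min(z)`: `w ∈ A_FPF(z)` and the one-line sequence `(w(1), w(2), …)` of `w`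
is lexicographically minimal among elements of `A_FPF(z)`. -/
def IsLexMinAtom (z w : Equiv.Perm ℤ) : Prop :=
  w ∈ AFPF z ∧ ∀ v ∈ AFPF z, v = w ∨
    ∃ k : ℤ, 0 < k ∧ w k < v k ∧ ∀ j : ℤ, 0 < j → j < k → w j = v j

/-- The FPF-involution diagram `D̂_FPF(z) = {(i,j) : 0 < j, j < i < z(j), j < z(i)}`. -/
def DhatFPF (z : Equiv.Perm ℤ) : Set (ℤ × ℤ) :=
  {p | 0 < p.2 ∧ p.2 < p.1 ∧ p.1 < z p.2 ∧ p.2 < z p.1}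

/-- The `i`-th entry of the FPF-involution code: the number of positions in row `i`
of `D̂_FPF(z)`. -/
def fpfCode (z : Equiv.Perm ℤ) (i : ℤ) : ℕ := {j : ℤ | (i, j) ∈ DhatFPF z}.ncard

/-- The essential set of a diagram `D`. -/
def EssSet (D : Set (ℤ × ℤ)) : Set (ℤ × ℤ) :=
  {p | p ∈ D ∧ (p.1 + 1, p.2) ∉ D ∧ (p.1, p.2 + 1) ∉ D}

/-- `w` is `n`-Grassmannian: its unique descent (among positive positions) is at `n`. -/
def IsNGrassmannian (n : ℤ) (w : Equiv.Perm ℤ) : Prop :=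
  (∀ i : ℤ, 0 < i → i ≠ n → w i < w (i + 1)) ∧ w (n + 1) < w n

namespace FpfAux

lemma Theta_apply (x : ℤ) : Theta x = if Even x then x - 1 else x + 1 := rfl

lemma Theta_even {x : ℤ} (h : Even x) : Theta x = x - 1 := by simp [Theta_apply, h]
lemma Theta_odd {x : ℤ} (h : ¬ Even x) : Theta x = x + 1 := by simp [Theta_apply, h]

lemma Theta_cases (x : ℤ) : Theta x = x - 1 ∨ Theta x = x + 1 := by
  by_cases h : Even x
  · exact Or.inl (Theta_even h)
  · exact Or.inr (Theta_odd h)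

lemma Theta_nonpos {x : ℤ} (h : x ≤ 0) : Theta x ≤ 0 := by
  by_cases he : Even x
  · rw [Theta_even he]; omega
  · rw [Theta_odd he]
    have : x ≠ 0 := fun h0 => he (h0 ▸ Even.zero)
    omega

end FpfAux

namespace FpfAux

section ZBasics
variable {z : Equiv.Perm ℤ} (hz : z ∈ FInf)
include hz

lemma zz (x : ℤ) : z (z x) = x := by
  have h := hz.1.1
  have := congrArg (fun (w : Equiv.Perm ℤ) => w x) h
  simpa [Equiv.Perm.mul_apply] using this

lemma zne (x : ℤ) : z x ≠ x := hz.1.2.1 x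

lemma zneg {x : ℤ} (h : x ≤ 0) : z x = Theta x := hz.2 x h

lemma zpos {x : ℤ} (h : 0 < x) : 0 < z x := by
  by_contra hc
  push_neg at hc
  have h1 : z (z x) = Theta (z x) := zneg hz hc
  rw [zz hz] at h1
  have := Theta_nonpos hc
  omega

lemma z_stable {x : ℤ} (h : z x ≠ Theta x) : z (z x) ≠ Theta (z x) := by
  rw [zz hz]
  intro hx
  apply h
  have := thetaFun_invol (z x)
  have h2 : Theta (Theta (z x)) = z x := thetaFun_invol (z x)
  rw [← hx] at h2
  omega

lemma exists_bound : ∃ B : ℤ, 0 < B ∧ Even B ∧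
    ∀ x : ℤ, z x ≠ Theta x → (-B < x ∧ x < B ∧ -B < z x ∧ z x < B) := by
  have hS : {i : ℤ | z i ≠ Theta i}.Finite := hz.1.2.2
  obtain ⟨C, hC⟩ := hS.bddAbove
  obtain ⟨c, hc⟩ := hS.bddBelow
  refine ⟨2 * (|C| + |c| + 1), by positivity, ⟨|C| + |c| + 1, by ring⟩, ?_⟩
  intro x hx
  have h1 : x ≤ C := hC hx
  have h2 : c ≤ x := hc hx
  have hx' := z_stable hz hx
  have h3 : z x ≤ C := hC hx'
  have h4 : c ≤ z x := hc hx'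
  have := abs_nonneg C
  have := abs_nonneg c
  have := le_abs_self C
  have := neg_abs_le c
  omega

end ZBasics
end FpfAux

namespace FpfAux

/-- `m_i = min(i, z(i))`. -/
def mzf (z : Equiv.Perm ℤ) (i : ℤ) : ℤ := min i (z i)

/-- Row `i` of the FPF involution diagram. -/
def Rz (z : Equiv.Perm ℤ) (i : ℤ) : Set ℤ := {j | 0 < j ∧ j < i ∧ i < z j ∧ j < z i}

section Rows
variable {z : Equiv.Perm ℤ}

lemma mem_Rz {i j : ℤ} : j ∈ Rz z i ↔ 0 < j ∧ j < mzf z i ∧ i < z j := by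
  simp only [Rz, Set.mem_setOf_eq, mzf, lt_min_iff]
  tauto

lemma Rz_finite (i : ℤ) : (Rz z i).Finite := by
  apply (Set.finite_Ioo 0 i).subset
  intro j hj
  exact Set.mem_Ioo.mpr ⟨hj.1, hj.2.1⟩

lemma mem_Dhat {p : ℤ × ℤ} : p ∈ DhatFPF z ↔ p.2 ∈ Rz z p.1 := by
  simp only [DhatFPF, Rz, Set.mem_setOf_eq]

lemma fpfCode_eq (i : ℤ) : fpfCode z i = (Rz z i).ncard := rfl

lemma desc_iff {i : ℤ} : FpfVisDes z i ↔ mzf z (i + 1) < mzf z i := by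
  unfold FpfVisDes FpfVisInv mzf
  constructor
  · rintro ⟨-, h⟩
    exact lt_of_le_of_lt (min_le_right _ _) h
  · intro h
    refine ⟨by omega, ?_⟩
    have h1 : min (i + 1) (z (i + 1)) < i + 1 := lt_of_lt_of_le h (by omega)
    have h2 : min (i + 1) (z (i + 1)) = z (i + 1) := by omega
    omega

variable (hz : z ∈ FInf)
include hz

lemma desc_pos {i : ℤ} (h : FpfVisDes z i) : 0 < i := by
  by_contra hc
  push_neg at hc
  obtain ⟨-, h2⟩ := h
  rcases lt_or_eq_of_le hc with hc' | hc'
  · have h3 : z (i + 1) = Theta (i + 1) := zneg hz (by omega)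
    rcases Theta_cases (i + 1) with h4 | h4 <;> omega
  · subst hc'
    have h3 : 0 < z 1 := zpos hz one_pos
    have h4 : z 0 = Theta 0 := zneg hz le_rfl
    have h5 : Theta (0:ℤ) = -1 := by rw [Theta_even Even.zero]; norm_num
    simp only [zero_add] at h2
    omega

lemma z_one_ge : 2 ≤ z 1 := by
  have := zpos hz one_pos
  have := zne hz 1
  omega

lemma not_desc_one : ¬ FpfVisDes z 1 := by
  rw [desc_iff]
  have h1 : 0 < z (1+1) := zpos hz (by norm_num)
  have h2 := z_one_ge hz
  unfold mzf
  omega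

lemma desc_mem {i : ℤ} (h : FpfVisDes z i) : z (i + 1) ∈ Rz z i := by
  have hi := desc_pos hz h
  obtain ⟨-, h2⟩ := h
  rw [mem_Rz]
  refine ⟨zpos hz (by omega), h2, ?_⟩
  rw [zz hz]
  omega

lemma subset_next {i : ℤ} (h : ¬ FpfVisDes z i) : Rz z i ⊆ Rz z (i + 1) := by
  rw [desc_iff] at h
  push_neg at h
  intro j hj
  rw [mem_Rz] at hj ⊢
  obtain ⟨hj1, hj2, hj3⟩ := hj
  have hne : z j ≠ i + 1 := by
    intro he
    have : z (i+1) = j := by rw [← he, zz hz]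
    have : mzf z (i+1) = j := by unfold mzf at *; omega
    omega
  exact ⟨hj1, by omega, by omega⟩

omit hz in
lemma desc_subset {i : ℤ} (h : FpfVisDes z i) : Rz z (i + 1) ⊆ Rz z i \ {z (i + 1)} := by
  have hd := desc_iff.mp h
  have h2 : mzf z (i + 1) = z (i + 1) := by
    unfold mzf at *; omega
  intro j hj
  rw [mem_Rz] at hj
  obtain ⟨hj1, hj2, hj3⟩ := hj
  constructor
  · rw [mem_Rz]
    exact ⟨hj1, by omega, by omega⟩
  · simp only [Set.mem_singleton_iff]
    omega

omit hz in
lemma mz_chain {l r : ℤ} (hlr : l ≤ r) (h : ∀ k, l ≤ k → k < r → ¬ FpfVisDes z k) :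
    mzf z l ≤ mzf z r := by
  have key : ∀ d : ℕ, ∀ r', r' = l + d → (∀ k, l ≤ k → k < r' → ¬ FpfVisDes z k) →
      mzf z l ≤ mzf z r' := by
    intro d
    induction d with
    | zero => intro r' hr' _; simp [hr']
    | succ m ih =>
      intro r' hr' hk
      have h1 : mzf z l ≤ mzf z (l + m) := ih _ rfl (fun k h1 h2 => hk k h1 (by omega))
      have h2 : ¬ FpfVisDes z (l + m) := hk _ (by omega) (by omega)
      rw [desc_iff] at h2
      push_neg at h2
      have : r' = (l + m) + 1 := by omega
      rw [this]
      omega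
  obtain ⟨d, hd⟩ : ∃ d : ℕ, r = l + d := ⟨(r - l).toNat, by omega⟩
  exact key d r hd h

lemma Rz_empty {i : ℤ} (h : ∀ k, i ≤ k → ¬ FpfVisDes z k) : Rz z i = ∅ := by
  ext j
  simp only [Set.mem_empty_iff_false, iff_false]
  intro hj
  rw [mem_Rz] at hj
  obtain ⟨hj1, hj2, hj3⟩ := hj
  have hzj : mzf z (z j) = j := by
    have : z (z j) = j := zz hz j
    unfold mzf
    rw [this]
    unfold mzf at hj2
    omega
  have : mzf z i ≤ mzf z (z j) := mz_chain (le_of_lt hj3) (fun k hk _ => h k (by omega))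
  unfold mzf at *
  omega

end Rows
end FpfAux

namespace FpfAux
section Parts
variable {z : Equiv.Perm ℤ} (hz : z ∈ FInf) {n : ℤ} (hn : 0 < n)
include hz

omit hz in
lemma exists_max {s : Set ℤ} (hf : s.Finite) (hne : s.Nonempty) :
    ∃ a ∈ s, ∀ b ∈ s, b ≤ a := by
  obtain ⟨a, ha, hmax⟩ := Set.exists_max_image s id hf hne
  exact ⟨a, ha, hmax⟩

omit hz in
lemma Rz_one : Rz z 1 = ∅ := by
  ext j
  simp only [Rz, Set.mem_setOf_eq, Set.mem_empty_iff_false, iff_false]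
  intro h
  omega

lemma desc_strict {i : ℤ} (hd : FpfVisDes z i) : fpfCode z (i + 1) < fpfCode z i := by
  rw [fpfCode_eq, fpfCode_eq]
  calc (Rz z (i+1)).ncard ≤ (Rz z i \ {z (i + 1)}).ncard :=
        Set.ncard_le_ncard (desc_subset hd) ((Rz_finite i).diff)
    _ < (Rz z i).ncard := Set.ncard_diff_singleton_lt_of_mem (desc_mem hz hd) (Rz_finite i)

include hn in
lemma partB : ({i : ℤ | FpfVisDes z i} = {n}) ↔
    (fpfCode z 1 = 0 ∧ (∀ i : ℤ, 2 ≤ i → i + 1 ≤ n → fpfCode z i ≤ fpfCode z (i + 1)) ∧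
      fpfCode z n ≠ 0 ∧ (∀ i : ℤ, n < i → fpfCode z i = 0)) := by
  constructor
  · intro hset
    have hiff : ∀ i : ℤ, FpfVisDes z i ↔ i = n := fun i => by
      rw [← Set.mem_singleton_iff, ← hset]; rfl
    refine ⟨?_, ?_, ?_, ?_⟩
    · rw [fpfCode_eq, Rz_one]; simp
    · intro i h2 hin
      rw [fpfCode_eq, fpfCode_eq]
      refine Set.ncard_le_ncard (subset_next hz ?_) (Rz_finite _)
      intro hd
      have := (hiff i).mp hd
      omega
    · rw [fpfCode_eq]
      have hne : (Rz z n).Nonempty := ⟨_, desc_mem hz ((hiff n).mpr rfl)⟩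
      rw [Ne, Set.ncard_eq_zero (Rz_finite n)]
      exact hne.ne_empty
    · intro i hi
      rw [fpfCode_eq, Set.ncard_eq_zero (Rz_finite i)]
      refine Rz_empty hz (fun k hk hd => ?_)
      have := (hiff k).mp hd
      omega
  · rintro ⟨h1, h2, h3, h4⟩
    ext i
    simp only [Set.mem_setOf_eq, Set.mem_singleton_iff]
    constructor
    · intro hd
      by_contra hne
      have hipos := desc_pos hz hd
      rcases lt_or_gt_of_ne hne with hlt | hgt
      · rcases eq_or_lt_of_le (Int.add_one_le_of_lt hipos) with h1' | h2'
        · exact not_desc_one hz (by rwa [← h1'] at hd)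
        · have := desc_strict hz hd
          have := h2 i (by omega) (by omega)
          omega
      · have hz0 := h4 i hgt
        rw [fpfCode_eq, Set.ncard_eq_zero (Rz_finite i)] at hz0
        exact absurd hz0 (Set.nonempty_iff_ne_empty.mp ⟨_, desc_mem hz hd⟩)
    · intro hin
      rw [hin]
      by_contra hd
      have hsub : Rz z n ⊆ Rz z (n + 1) := subset_next hz hd
      have hle : fpfCode z n ≤ fpfCode z (n + 1) := by
        rw [fpfCode_eq, fpfCode_eq]
        exact Set.ncard_le_ncard hsub (Rz_finite _)
      have := h4 (n + 1) (by omega)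
      omega

include hn in
lemma partC : ({i : ℤ | FpfVisDes z i} = {n}) ↔
    ((EssSet (DhatFPF z)).Nonempty ∧ ∀ p ∈ EssSet (DhatFPF z), p.1 = n) := by
  constructor
  · intro hset
    have hiff : ∀ i : ℤ, FpfVisDes z i ↔ i = n := fun i => by
      rw [← Set.mem_singleton_iff, ← hset]; rfl
    have hdn : FpfVisDes z n := (hiff n).mpr rfl
    have hRn : (Rz z n).Nonempty := ⟨_, desc_mem hz hdn⟩
    have hempty : ∀ i : ℤ, n < i → Rz z i = ∅ := fun i hi =>
      Rz_empty hz (fun k hk hd => by have := (hiff k).mp hd; omega)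
    constructor
    · obtain ⟨j, hjmem, hjmax⟩ := exists_max (Rz_finite n) hRn
      refine ⟨(n, j), ?_, ?_, ?_⟩
      · exact mem_Dhat.mpr hjmem
      · rw [mem_Dhat]
        simp only
        rw [hempty (n + 1) (by omega)]
        exact Set.notMem_empty _
      · rw [mem_Dhat]
        intro hc
        have := hjmax _ hc
        omega
    · rintro ⟨i, j⟩ ⟨hp1, hp2, hp3⟩
      rw [mem_Dhat] at hp1 hp2
      simp only at hp1 hp2 ⊢
      by_contra hne
      rcases lt_or_gt_of_ne hne with hlt | hgt
      · have hi1 : 1 ≤ i := by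
          rw [mem_Rz] at hp1
          have := hp1.1
          have := hp1.2.1
          unfold mzf at *
          omega
        exact hp2 (subset_next hz (fun hd => by have := (hiff i).mp hd; omega) hp1)
      · rw [hempty i hgt] at hp1
        exact hp1
  · rintro ⟨⟨p, hp⟩, hrow⟩
    have claim1 : ∀ i : ℤ, i ≠ n → ¬ FpfVisDes z i := by
      intro i hne hd
      have hRi : (Rz z i).Nonempty := ⟨_, desc_mem hz hd⟩
      obtain ⟨j, hjmem, hjmax⟩ := exists_max (Rz_finite i) hRi
      have hess : (i, j) ∈ EssSet (DhatFPF z) := by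
        refine ⟨mem_Dhat.mpr hjmem, ?_, ?_⟩
        · rw [mem_Dhat]
          simp only
          intro hc
          have hc' := desc_subset hd hc
          have hmz : mzf z (i + 1) = z (i + 1) := by
            have := desc_iff.mp hd
            unfold mzf at *
            omega
          rw [mem_Rz] at hc
          have hj0 : z (i + 1) ∈ Rz z i := desc_mem hz hd
          have := hjmax _ hj0
          omega
        · rw [mem_Dhat]
          intro hc
          have := hjmax _ hc
          omega
      exact hne (hrow _ hess)
    have claim2 : FpfVisDes z n := by
      by_contra hdn
      have hall : ∀ k : ℤ, ¬ FpfVisDes z k := by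
        intro k
        by_cases hk : k = n
        · rwa [hk]
        · exact claim1 k hk
      have hD : p.2 ∈ Rz z p.1 := mem_Dhat.mp hp.1
      have h1 : 1 ≤ p.1 := by
        rw [mem_Rz] at hD
        have := hD.1
        have := hD.2.1
        unfold mzf at *
        omega
      rw [Rz_empty hz (fun k _ => hall k)] at hD
      exact hD
    ext i
    simp only [Set.mem_setOf_eq, Set.mem_singleton_iff]
    constructor
    · intro hd
      by_contra hne
      exact claim1 i hne hd
    · intro hin
      rw [hin]
      exact claim2

end Parts
end FpfAux

namespace FpfAux

/-- `x` is the minimum of its `z`-cycle (among positive integers). -/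
def IsMn (z : Equiv.Perm ℤ) (x : ℤ) : Prop := 0 < x ∧ x < z x

/-- the predicate on `ℕ` whose members `m` correspond to cycle minima `m+1`. -/
def minP (z : Equiv.Perm ℤ) (m : ℕ) : Prop := ((m : ℤ) + 1) < z ((m : ℤ) + 1)

noncomputable instance decMinP (z : Equiv.Perm ℤ) : DecidablePred (minP z) :=
  Classical.decPred _

/-- enumeration of the cycle minima, in increasing order. -/
def aseq (z : Equiv.Perm ℤ) (i : ℕ) : ℤ := (Nat.nth (minP z) i : ℤ) + 1

/-- the number of cycle minima less than `x`. -/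
def cnt (z : Equiv.Perm ℤ) (x : ℤ) : ℕ := Nat.count (minP z) (x - 1).toNat

def w0fun (z : Equiv.Perm ℤ) (x : ℤ) : ℤ :=
  if x ≤ 0 then x else if x < z x then 2 * cnt z x + 1 else 2 * cnt z (z x) + 2

def w0inv (z : Equiv.Perm ℤ) (t : ℤ) : ℤ :=
  if t ≤ 0 then t
  else if Odd t then aseq z ((t - 1) / 2).toNat else z (aseq z ((t - 2) / 2).toNat)

section W0
variable {z : Equiv.Perm ℤ} (hz : z ∈ FInf)
include hz

lemma minP_infinite : (setOf (minP z)).Infinite := by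
  obtain ⟨B, hB0, hBe, hB⟩ := exists_bound hz
  apply Set.infinite_of_not_bddAbove
  rw [not_bddAbove_iff]
  intro N
  refine ⟨2 * (N + B.toNat + 1), ?_, by omega⟩
  show minP z _
  simp only [minP]
  set x : ℤ := (2 * (N + B.toNat + 1) : ℕ) + 1 with hx
  have hxodd : ¬ Even x := by
    rw [Int.even_iff]
    push_cast [hx]
    omega
  have hxB : ¬ (-B < x ∧ x < B ∧ -B < z x ∧ z x < B) := by
    push_cast [hx]
    intro hc
    omega
  have hzx : z x = Theta x := by
    by_contra hc
    exact hxB (hB x hc)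
  rw [hzx, Theta_odd hxodd]
  omega

end W0
end FpfAux

namespace FpfAux
section W0b
variable {z : Equiv.Perm ℤ} (hz : z ∈ FInf)
include hz

lemma aseq_isMn (i : ℕ) : IsMn z (aseq z i) := by
  have h := Nat.nth_mem_of_infinite (minP_infinite hz) i
  exact ⟨by unfold aseq; positivity, h⟩

lemma aseq_strictMono : StrictMono (aseq z) := by
  intro i j hij
  have := Nat.nth_strictMono (minP_infinite hz) hij
  unfold aseq
  omega

lemma cnt_aseq (i : ℕ) : cnt z (aseq z i) = i := by
  unfold cnt aseq
  have h1 : ((Nat.nth (minP z) i : ℤ) + 1 - 1).toNat = Nat.nth (minP z) i := by omega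
  rw [h1, Nat.count_nth_of_infinite (minP_infinite hz)]

omit hz in
lemma aseq_cnt {x : ℤ} (hx : IsMn z x) : aseq z (cnt z x) = x := by
  obtain ⟨hx1, hx2⟩ := hx
  have hP : minP z ((x - 1).toNat) := by
    unfold minP
    have : ((x - 1).toNat : ℤ) + 1 = x := by omega
    rw [this]
    exact hx2
  unfold aseq cnt
  rw [Nat.nth_count hP]
  omega

lemma cnt_lt_cnt {x y : ℤ} (hx : IsMn z x) (hy : IsMn z y) : cnt z x < cnt z y ↔ x < y := by
  rw [← (aseq_strictMono hz).lt_iff_lt, aseq_cnt hx, aseq_cnt hy]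

lemma zIsMn {x : ℤ} (hx : 0 < x) (hnm : ¬ x < z x) : IsMn z (z x) := by
  refine ⟨zpos hz hx, ?_⟩
  rw [zz hz]
  have := zne hz x
  omega

lemma w0_left_inv : Function.LeftInverse (w0inv z) (w0fun z) := by
  intro x
  unfold w0fun
  by_cases h0 : x ≤ 0
  · simp [h0, w0inv]
  · push_neg at h0
    by_cases hmin : x < z x
    · simp only [if_neg (by omega : ¬ x ≤ 0), if_pos hmin]
      unfold w0inv
      have hodd : Odd (2 * (cnt z x : ℤ) + 1) := ⟨cnt z x, by ring⟩
      rw [if_neg (by omega : ¬ (2 * (cnt z x : ℤ) + 1 ≤ 0)), if_pos hodd]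
      have h1 : ((2 * (cnt z x : ℤ) + 1 - 1) / 2).toNat = cnt z x := by omega
      rw [h1, aseq_cnt ⟨h0, hmin⟩]
    · simp only [if_neg (by omega : ¬ x ≤ 0), if_neg hmin]
      unfold w0inv
      have heven : ¬ Odd (2 * (cnt z (z x) : ℤ) + 2) := by
        rw [Int.odd_iff]
        omega
      rw [if_neg (by omega : ¬ (2 * (cnt z (z x) : ℤ) + 2 ≤ 0)), if_neg heven]
      have h1 : ((2 * (cnt z (z x) : ℤ) + 2 - 2) / 2).toNat = cnt z (z x) := by omega
      rw [h1, aseq_cnt (zIsMn hz h0 hmin), zz hz]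

lemma w0_right_inv : Function.RightInverse (w0inv z) (w0fun z) := by
  intro t
  unfold w0inv
  by_cases h0 : t ≤ 0
  · simp [h0, w0fun]
  · push_neg at h0
    by_cases hodd : Odd t
    · rw [if_neg (by omega), if_pos hodd]
      have hmn := aseq_isMn hz ((t - 1) / 2).toNat
      unfold w0fun
      rw [if_neg (by have := hmn.1; omega : ¬ aseq z ((t - 1) / 2).toNat ≤ 0), if_pos hmn.2,
        cnt_aseq hz]
      obtain ⟨k, hk⟩ := hodd
      push_cast
      omega
    · rw [if_neg (by omega), if_neg hodd]
      have hmn := aseq_isMn hz ((t - 2) / 2).toNat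
      have hzx : 0 < z (aseq z ((t - 2) / 2).toNat) := zpos hz hmn.1
      have hnmin : ¬ z (aseq z ((t - 2) / 2).toNat) < z (z (aseq z ((t - 2) / 2).toNat)) := by
        rw [zz hz]
        exact not_lt.mpr (le_of_lt hmn.2)
      unfold w0fun
      rw [if_neg (by omega : ¬ z (aseq z ((t - 2) / 2).toNat) ≤ 0), if_neg hnmin, zz hz,
        cnt_aseq hz]
      rw [Int.odd_iff] at hodd
      push_cast
      omega

end W0b

/-- The lexicographically minimal atom `β_min(z)`. -/
def w0 (z : Equiv.Perm ℤ) (hz : z ∈ FInf) : Equiv.Perm ℤ :=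
  ⟨w0fun z, w0inv z, w0_left_inv hz, w0_right_inv hz⟩

section W0c
variable {z : Equiv.Perm ℤ} (hz : z ∈ FInf)

lemma w0_apply (x : ℤ) : w0 z hz x = w0fun z x := rfl
lemma w0_symm_apply (t : ℤ) : (w0 z hz)⁻¹ t = w0inv z t := rfl

lemma w0_nonpos {x : ℤ} (h : x ≤ 0) : w0 z hz x = x := by
  rw [w0_apply]; unfold w0fun; simp [h]

lemma w0_pos {x : ℤ} (h : 0 < x) : 0 < w0 z hz x := by
  rw [w0_apply]; unfold w0fun
  rw [if_neg (by omega)]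
  by_cases hmin : x < z x <;> simp [hmin] <;> positivity

lemma w0_min {x : ℤ} (h : IsMn z x) : w0 z hz x = 2 * cnt z x + 1 := by
  rw [w0_apply]; unfold w0fun
  rw [if_neg (by have := h.1; omega : ¬ x ≤ 0), if_pos h.2]

lemma w0_nonmin {x : ℤ} (h0 : 0 < x) (h : ¬ x < z x) : w0 z hz x = 2 * cnt z (z x) + 2 := by
  rw [w0_apply]; unfold w0fun
  rw [if_neg (by omega : ¬ x ≤ 0), if_neg h]

end W0c
end FpfAux

namespace FpfAux
section W0d
variable {z : Equiv.Perm ℤ} (hz : z ∈ FInf)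
include hz

lemma count_half {N : ℕ} (hinv : ∀ x : ℤ, 1 ≤ x → x ≤ (N:ℤ) → 1 ≤ z x ∧ z x ≤ (N:ℤ)) :
    2 * Nat.count (minP z) N = N := by
  classical
  rw [Nat.count_eq_card_filter_range]
  have key : ((Finset.range N).filter (fun m => minP z m)).card
      = ((Finset.range N).filter (fun m => ¬ minP z m)).card := by
    refine Finset.card_bij (fun k _ => (z ((k:ℤ) + 1) - 1).toNat) ?_ ?_ ?_
    · intro k hk
      simp only [Finset.mem_filter, Finset.mem_range] at hk ⊢
      simp only [minP] at hk ⊢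
      obtain ⟨hk1, hk2⟩ := hk
      have hx : 1 ≤ ((k:ℤ) + 1) ∧ ((k:ℤ)+1) ≤ (N:ℤ) := ⟨by omega, by omega⟩
      have hzx := hinv _ hx.1 hx.2
      have hzz : z (z ((k:ℤ)+1)) = (k:ℤ)+1 := zz hz _
      refine ⟨by omega, ?_⟩
      intro hc
      have h2 : ((z ((k:ℤ)+1) - 1).toNat : ℤ) + 1 = z ((k:ℤ)+1) := by omega
      rw [h2, hzz] at hc
      omega
    · intro k hk l hl hkl
      simp only [Finset.mem_filter, Finset.mem_range] at hk hl
      simp only [minP] at hk hl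
      have hzk := hinv ((k:ℤ)+1) (by omega) (by omega)
      have hzl := hinv ((l:ℤ)+1) (by omega) (by omega)
      have h1 : z ((k:ℤ)+1) = z ((l:ℤ)+1) := by omega
      have := z.injective h1
      omega
    · intro j hj
      simp only [Finset.mem_filter, Finset.mem_range] at hj
      simp only [minP] at hj
      obtain ⟨hj1, hj2⟩ := hj
      have hx : 1 ≤ ((j:ℤ) + 1) ∧ ((j:ℤ)+1) ≤ (N:ℤ) := ⟨by omega, by omega⟩
      have hzx := hinv _ hx.1 hx.2
      have hne := zne hz ((j:ℤ)+1)
      have hlt : z ((j:ℤ)+1) < (j:ℤ)+1 := by omega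
      refine ⟨(z ((j:ℤ)+1) - 1).toNat, ?_, ?_⟩
      · simp only [Finset.mem_filter, Finset.mem_range]
        simp only [minP]
        have h2 : ((z ((j:ℤ)+1) - 1).toNat : ℤ) + 1 = z ((j:ℤ)+1) := by omega
        refine ⟨by omega, ?_⟩
        rw [h2, zz hz]
        omega
      · have h2 : ((z ((j:ℤ)+1) - 1).toNat : ℤ) + 1 = z ((j:ℤ)+1) := by omega
        have h3 : z (((z ((j:ℤ)+1) - 1).toNat : ℤ) + 1) = (j:ℤ)+1 := by rw [h2, zz hz]
        omega
  have hcard := Finset.card_filter_add_card_filter_not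
    (s := Finset.range N) (p := fun m => minP z m)
  rw [Finset.card_range] at hcard
  omega

lemma w0_large {B : ℤ} (hB0 : 0 < B) (hBe : Even B)
    (hB : ∀ x : ℤ, z x ≠ Theta x → (-B < x ∧ x < B ∧ -B < z x ∧ z x < B))
    {x : ℤ} (hx : B < x) : w0 z hz x = x := by
  have hout : ∀ y : ℤ, B ≤ y → z y = Theta y := by
    intro y hy
    by_contra hc
    have := hB y hc
    omega
  have hinv : ∀ N : ℤ, B ≤ N → Even N →
      ∀ y : ℤ, 1 ≤ y → y ≤ N → 1 ≤ z y ∧ z y ≤ N := by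
    intro N hN hNe y h1 h2
    refine ⟨zpos hz (by omega), ?_⟩
    by_cases hc : z y = Theta y
    · rcases Theta_cases y with h | h
      · omega
      · by_cases hyN : y < N
        · omega
        · exfalso
          have hyy : y = N := by omega
          have h2 : Theta y = y - 1 := Theta_even (hyy ▸ hNe)
          omega
    · have := hB y hc
      omega
  obtain ⟨B', hB'⟩ : ∃ B' : ℕ, (B':ℤ) = B := ⟨B.toNat, by omega⟩
  by_cases hpar : Even x
  · -- z x = x - 1
    have hzx : z x = x - 1 := by rw [hout x (by omega), Theta_even hpar]
    have hnm : ¬ x < z x := by omega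
    rw [w0_nonmin hz (by omega) hnm, hzx]
    have hEv : Even (x - 2) := by
      obtain ⟨b, hb⟩ := hpar
      exact ⟨b - 1, by omega⟩
    have H := hinv (x - 2) (by obtain ⟨b, hb⟩ := hBe; obtain ⟨c, hc2⟩ := hpar; omega) hEv
    have hcnt : 2 * Nat.count (minP z) ((x-2).toNat) = (x-2).toNat := by
      refine count_half hz (fun y hy1 hy2 => ?_)
      have h := H y hy1 (by omega)
      omega
    unfold cnt
    have he : (x - 1 - 1 : ℤ) = x - 2 := by ring
    rw [he]
    omega
  · have hzx : z x = x + 1 := by rw [hout x (by omega), Theta_odd hpar]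
    have hmn : IsMn z x := ⟨by omega, by omega⟩
    rw [w0_min hz hmn]
    have hEv : Even (x - 1) := by
      rcases Int.even_or_odd x with h | h
      · exact absurd h hpar
      · obtain ⟨b, hb⟩ := h
        exact ⟨b, by omega⟩
    have H := hinv (x - 1) (by omega) hEv
    have hcnt : 2 * Nat.count (minP z) ((x-1).toNat) = (x-1).toNat := by
      refine count_half hz (fun y hy1 hy2 => ?_)
      have h := H y hy1 (by omega)
      omega
    unfold cnt
    omega

lemma w0_SInf : w0 z hz ∈ SInf := by
  obtain ⟨B, hB0, hBe, hB⟩ := exists_bound hz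
  constructor
  · apply (Set.finite_Icc 1 B).subset
    intro x hx
    simp only [Set.mem_setOf_eq] at hx
    simp only [Set.mem_Icc]
    constructor
    · by_contra hc
      exact hx (w0_nonpos hz (by omega))
    · by_contra hc
      exact hx (w0_large hz hB0 hBe hB (by omega))
  · intro x hx
    by_contra hc
    exact hx (w0_nonpos hz (by omega))

lemma w0_conj_point (x : ℤ) : w0 z hz (z x) = Theta (w0 z hz x) := by
  by_cases h0 : x ≤ 0
  · rw [w0_nonpos hz h0, zneg hz h0, w0_nonpos hz (Theta_nonpos h0)]
  · push_neg at h0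
    by_cases hmin : x < z x
    · have h1 : ¬ z x < z (z x) := by rw [zz hz]; omega
      rw [w0_nonmin hz (zpos hz h0) h1, zz hz, w0_min hz ⟨h0, hmin⟩]
      have hodd : ¬ Even (2 * (cnt z x : ℤ) + 1) := by rw [Int.even_iff]; omega
      rw [Theta_odd hodd]
      ring
    · have hmn : IsMn z (z x) := zIsMn hz h0 hmin
      rw [w0_min hz hmn, w0_nonmin hz h0 hmin]
      have heven : Even (2 * (cnt z (z x) : ℤ) + 2) := by rw [Int.even_iff]; omega
      rw [Theta_even heven]
      ring

lemma w0_conj : z = (w0 z hz)⁻¹ * Theta * (w0 z hz) := by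
  ext x
  simp only [Equiv.Perm.mul_apply]
  rw [← w0_conj_point hz x]
  simp

end W0d
end FpfAux

namespace FpfAux
section W0e
variable {z : Equiv.Perm ℤ} (hz : z ∈ FInf)
include hz

lemma zmem_of_nonmin {x : ℤ} (h0 : 0 < x) (h : ¬ x < z x) : IsMn z (z x) := zIsMn hz h0 h

lemma w0_desc_iff (i : ℤ) : FpfVisDes z i ↔ w0 z hz (i + 1) < w0 z hz i := by
  by_cases hi : 0 < i
  case neg =>
    push_neg at hi
    constructor
    · intro h
      exact absurd (desc_pos hz h) (by omega)
    · intro h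
      exfalso
      rcases lt_or_eq_of_le hi with h1 | h1
      · rw [w0_nonpos hz (by omega : i ≤ 0), w0_nonpos hz (by omega : i + 1 ≤ 0)] at h
        omega
      · subst h1
        rw [w0_nonpos hz le_rfl] at h
        have := w0_pos hz (by norm_num : (0:ℤ) < 0 + 1)
        omega
  case pos =>
    have hi1 : (0:ℤ) < i + 1 := by omega
    have hnei := zne hz i
    have hnei1 := zne hz (i + 1)
    have hzi := zpos hz hi
    have hzi1 := zpos hz hi1
    by_cases hm : i < z i
    · by_cases hm1 : i + 1 < z (i + 1)
      · have hc : cnt z i < cnt z (i+1) :=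
          (cnt_lt_cnt hz ⟨hi, hm⟩ ⟨hi1, hm1⟩).mpr (by omega)
        rw [w0_min hz ⟨hi, hm⟩, w0_min hz ⟨hi1, hm1⟩]
        unfold FpfVisDes FpfVisInv
        simp only [lt_min_iff]
        omega
      · by_cases hcase : z (i + 1) = i
        · have hzii : z i = i + 1 := by nth_rewrite 1 [← hcase]; rw [zz hz]
          rw [w0_min hz ⟨hi, hm⟩, w0_nonmin hz hi1 hm1, hcase]
          unfold FpfVisDes FpfVisInv
          simp only [lt_min_iff]
          omega
        · have hlt : z (i + 1) < i := by omega
          have hmem : IsMn z (z (i+1)) := zmem_of_nonmin hz hi1 hm1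
          have hc : cnt z (z (i+1)) < cnt z i :=
            (cnt_lt_cnt hz hmem ⟨hi, hm⟩).mpr hlt
          rw [w0_min hz ⟨hi, hm⟩, w0_nonmin hz hi1 hm1]
          unfold FpfVisDes FpfVisInv
          simp only [lt_min_iff]
          omega
    · by_cases hm1 : i + 1 < z (i + 1)
      · have hmem : IsMn z (z i) := zmem_of_nonmin hz hi hm
        have hc : cnt z (z i) < cnt z (i+1) :=
          (cnt_lt_cnt hz hmem ⟨hi1, hm1⟩).mpr (by omega)
        rw [w0_nonmin hz hi hm, w0_min hz ⟨hi1, hm1⟩]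
        unfold FpfVisDes FpfVisInv
        simp only [lt_min_iff]
        omega
      · have hmem : IsMn z (z i) := zmem_of_nonmin hz hi hm
        have hmem1 : IsMn z (z (i+1)) := zmem_of_nonmin hz hi1 hm1
        have hne2 : z (i + 1) ≠ i := by
          intro hc
          have : z i = i + 1 := by nth_rewrite 1 [← hc]; rw [zz hz]
          omega
        have hne3 : z (i + 1) ≠ z i := fun hc => by
          have := z.injective hc
          omega
        rcases lt_trichotomy (z (i+1)) (z i) with ht | ht | ht
        · have hc := (cnt_lt_cnt hz hmem1 hmem).mpr ht
          rw [w0_nonmin hz hi hm, w0_nonmin hz hi1 hm1]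
          unfold FpfVisDes FpfVisInv
          simp only [lt_min_iff]
          omega
        · exact absurd ht hne3
        · have hc := (cnt_lt_cnt hz hmem hmem1).mpr ht
          rw [w0_nonmin hz hi hm, w0_nonmin hz hi1 hm1]
          unfold FpfVisDes FpfVisInv
          simp only [lt_min_iff]
          omega

lemma w0_slot {k y : ℤ} (hk : 0 < k) (hky : k < y) (hlt : w0 z hz y < w0 z hz k) :
    ¬ y < z y ∧ z y < k ∧ w0 z hz (z y) = w0 z hz y - 1 := by
  have hy : 0 < y := by omega
  have hnm : ¬ y < z y := by
    intro hmin
    rw [w0_min hz ⟨hy, hmin⟩] at hlt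
    by_cases hkm : k < z k
    · rw [w0_min hz ⟨hk, hkm⟩] at hlt
      have : cnt z k < cnt z y := (cnt_lt_cnt hz ⟨hk, hkm⟩ ⟨hy, hmin⟩).mpr hky
      omega
    · rw [w0_nonmin hz hk hkm] at hlt
      have hzk : IsMn z (z k) := zmem_of_nonmin hz hk hkm
      have : cnt z (z k) < cnt z y :=
        (cnt_lt_cnt hz hzk ⟨hy, hmin⟩).mpr (by have := zne hz k; omega)
      omega
  have hzymem : IsMn z (z y) := zmem_of_nonmin hz hy hnm
  have hzyk : z y < k := by
    rcases lt_trichotomy (z y) k with h | h | h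
    · exact h
    · exfalso
      rw [w0_nonmin hz hy hnm] at hlt
      have hkm : IsMn z k := h ▸ hzymem
      rw [w0_min hz hkm] at hlt
      rw [h] at hlt
      omega
    · exfalso
      rw [w0_nonmin hz hy hnm] at hlt
      by_cases hkm : k < z k
      · rw [w0_min hz ⟨hk, hkm⟩] at hlt
        have : cnt z k < cnt z (z y) := (cnt_lt_cnt hz ⟨hk, hkm⟩ hzymem).mpr h
        omega
      · rw [w0_nonmin hz hk hkm] at hlt
        have hzk : IsMn z (z k) := zmem_of_nonmin hz hk hkm
        have : cnt z (z k) < cnt z (z y) :=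
          (cnt_lt_cnt hz hzk hzymem).mpr (by have := zne hz k; omega)
        omega
  refine ⟨hnm, hzyk, ?_⟩
  rw [w0_min hz hzymem, w0_nonmin hz hy hnm]
  omega

lemma w0_lexmin (v : Equiv.Perm ℤ) (hv : v ∈ SInf) (hconj : z = v⁻¹ * Theta * v) :
    v = w0 z hz ∨ ∃ k, 0 < k ∧ w0 z hz k < v k ∧ ∀ j, 0 < j → j < k → w0 z hz j = v j := by
  classical
  have hvp : ∀ x, v (z x) = Theta (v x) := by
    intro x
    have h1 : z x = (v⁻¹ * Theta * v) x := by rw [← hconj]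
    simp only [Equiv.Perm.mul_apply] at h1
    rw [h1]
    simp
  have hfix : ∀ x : ℤ, x ≤ 0 → v x = x := by
    intro x hx
    by_contra hc
    have := hv.2 x hc
    omega
  have hvpos : ∀ x : ℤ, 0 < x → 0 < v x := by
    intro x hx
    by_contra hc
    push_neg at hc
    have h1 : v (v x) = v x := hfix _ hc
    have := v.injective h1
    omega
  by_cases hall : ∀ k : ℤ, 0 < k → v k = w0 z hz k
  · left
    ext x
    by_cases hx : 0 < x
    · exact hall x hx
    · push_neg at hx
      rw [hfix x hx, w0_nonpos hz hx]
  · right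
    push_neg at hall
    obtain ⟨k, ⟨hk0, hkne⟩, hkmin⟩ := Int.exists_least_of_bdd
      (P := fun j => 0 < j ∧ v j ≠ w0 z hz j)
      ⟨0, fun j hj => le_of_lt hj.1⟩ hall
    have claimA : ∀ y : ℤ, 0 < y → w0 z hz y < w0 z hz k → v y = w0 z hz y := by
      intro y hy hlt
      rcases lt_trichotomy y k with h | h | h
      · by_contra hc
        have := hkmin y ⟨hy, hc⟩
        omega
      · subst h; omega
      · obtain ⟨hnm, hzyk, hw⟩ := w0_slot hz hk0 h hlt
        have hzy0 : 0 < z y := zpos hz hy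
        have hvzy : v (z y) = w0 z hz (z y) := by
          by_contra hc
          have := hkmin (z y) ⟨hzy0, hc⟩
          omega
        have h1 : v (z (z y)) = Theta (v (z y)) := hvp (z y)
        rw [zz hz] at h1
        rw [hvzy, hw] at h1
        rw [w0_nonmin hz hy hnm] at h1 ⊢
        have hodd : ¬ Even (2 * (cnt z (z y) : ℤ) + 2 - 1) := by
          rw [Int.even_iff]; omega
        rw [Theta_odd hodd] at h1
        rw [h1]; ring
    refine ⟨k, hk0, ?_, fun j hj hjk => ?_⟩
    · rcases lt_trichotomy (v k) (w0 z hz k) with h | h | h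
      · exfalso
        have ht0 : 0 < v k := hvpos k hk0
        have hwy : w0 z hz ((w0 z hz)⁻¹ (v k)) = v k := by simp
        have hy0 : 0 < (w0 z hz)⁻¹ (v k) := by
          by_contra hc
          push_neg at hc
          rw [w0_nonpos hz hc] at hwy
          omega
        have h2 := claimA _ hy0 (by omega)
        rw [hwy] at h2
        have h3 : (w0 z hz)⁻¹ (v k) = k := v.injective h2
        rw [h3] at hwy
        omega
      · exact absurd h hkne
      · exact h
    · by_contra hc
      have := hkmin j ⟨hj, fun h' => hc h'.symm⟩
      omega

end W0e
end FpfAux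

namespace FpfAux

lemma Theta_ne (t : ℤ) : Theta t ≠ t := by
  rcases Theta_cases t with h | h <;> omega

lemma Theta_mul_self : Theta * Theta = 1 := by
  ext x
  simp only [Equiv.Perm.mul_apply, Equiv.Perm.one_apply]
  exact thetaFun_invol x

lemma SInf_bound {v : Equiv.Perm ℤ} (hv : v ∈ SInf) :
    ∃ B : ℤ, 0 < B ∧ ∀ x, v x ≠ x → 0 < x ∧ x < B ∧ 0 < v x ∧ v x < B := by
  obtain ⟨C, hC⟩ := hv.1.bddAbove
  refine ⟨|C| + 1, by positivity, fun x hx => ?_⟩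
  have h1 := hv.2 x hx
  have h2 : x ≤ C := hC hx
  have hvx : v (v x) ≠ v x := fun hc => hx (v.injective hc)
  have h3 := hv.2 _ hvx
  have h4 : v x ≤ C := hC hvx
  have := le_abs_self C
  exact ⟨h1, by omega, h3, by omega⟩

lemma InvSet_finite {v : Equiv.Perm ℤ} (hv : v ∈ SInf) : (InvSet v).Finite := by
  obtain ⟨B, hB0, hB⟩ := SInf_bound hv
  apply ((Set.finite_Icc 1 B).prod (Set.finite_Icc 1 B)).subset
  rintro ⟨p, q⟩ ⟨h1, h2⟩
  simp only at h1 h2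
  by_cases hq : v q = q
  · -- q fixed
    by_cases hp : v p = p
    · omega
    · have := hB p hp
      simp only [Set.mem_prod, Set.mem_Icc]
      omega
  · have hq' := hB q hq
    by_cases hp : v p = p
    · simp only [Set.mem_prod, Set.mem_Icc]
      omega
    · have := hB p hp
      simp only [Set.mem_prod, Set.mem_Icc]
      omega

lemma zzF {z' : Equiv.Perm ℤ} (hz' : z' ∈ FZ) (x : ℤ) : z' (z' x) = x := by
  have := congrArg (fun (w : Equiv.Perm ℤ) => w x) hz'.1
  simpa [Equiv.Perm.mul_apply] using this

lemma exists_boundF {z' : Equiv.Perm ℤ} (hz' : z' ∈ FZ) : ∃ B : ℤ, 0 < B ∧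
    ∀ x : ℤ, z' x ≠ Theta x → (-B < x ∧ x < B ∧ -B < z' x ∧ z' x < B) := by
  obtain ⟨C, hC⟩ := hz'.2.2.bddAbove
  obtain ⟨c, hc⟩ := hz'.2.2.bddBelow
  refine ⟨|C| + |c| + 1, by positivity, ?_⟩
  intro x hx
  have hstab : z' (z' x) ≠ Theta (z' x) := by
    rw [zzF hz']
    intro h
    apply hx
    have h2 : Theta (Theta (z' x)) = z' x := thetaFun_invol (z' x)
    rw [← h] at h2
    omega
  have h1 : x ≤ C := hC hx
  have h2 : c ≤ x := hc hx
  have h3 : z' x ≤ C := hC hstab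
  have h4 : c ≤ z' x := hc hstab
  have := le_abs_self C
  have := neg_abs_le c
  have := abs_nonneg C
  have := abs_nonneg c
  constructor
  · omega
  constructor
  · omega
  constructor
  · omega
  · omega

lemma NSet_finite {z' : Equiv.Perm ℤ} (hz' : z' ∈ FZ) :
    (InvSet z' \ CycSet z').Finite := by
  obtain ⟨B, hB0, hB⟩ := exists_boundF hz'
  apply ((Set.finite_Icc (-B) (B+1)).prod (Set.finite_Icc (-B) (B+1))).subset
  rintro ⟨p, q⟩ ⟨⟨h1, h2⟩, h3⟩
  simp only at h1 h2
  have hcyc : z' p ≠ q := by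
    intro hc
    exact h3 ⟨h1, hc⟩
  have houtp : ∀ y : ℤ, (y ≤ -B ∨ B ≤ y) → z' y = Theta y := by
    intro y hy
    by_contra hcon
    have := hB y hcon
    omega
  -- bound p below
  have hplow : -B < p := by
    by_contra hcon
    push_neg at hcon
    have hp : z' p = Theta p := houtp p (Or.inl hcon)
    have hTp : Theta p ≤ p + 1 ∧ p - 1 ≤ Theta p := by
      rcases Theta_cases p with h | h <;> omega
    have hq : z' q ≤ p := by omega
    have hq2 : z' (z' q) = Theta (z' q) := houtp _ (Or.inl (by omega))
    rw [zzF hz'] at hq2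
    have hTq : Theta (z' q) ≤ z' q + 1 ∧ z' q - 1 ≤ Theta (z' q) := by
      rcases Theta_cases (z' q) with h | h <;> omega
    -- q = p + 1 and z' q = p, so z' p = q : contradiction
    have hqp : q = p + 1 := by omega
    have hzq : z' q = p := by
      rcases Theta_cases (z' q) with h | h <;> omega
    have : z' p = q := by rw [← hzq, zzF hz']
    exact hcyc this
  -- bound p above
  have hphigh : p < B := by
    by_contra hcon
    push_neg at hcon
    have hp : z' p = Theta p := houtp p (Or.inr hcon)
    have hq : z' q = Theta q := houtp q (Or.inr (by omega))
    have hTp : Theta p ≤ p + 1 ∧ p - 1 ≤ Theta p := by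
      rcases Theta_cases p with h | h <;> omega
    have hTq : Theta q ≤ q + 1 ∧ q - 1 ≤ Theta q := by
      rcases Theta_cases q with h | h <;> omega
    -- forces Theta q = p, q = p + 1, Theta p = q
    have h5 : Theta q = p ∧ q = p + 1 := by omega
    have h6 : Theta p = q := by
      have := thetaFun_invol q
      have h7 : Theta (Theta q) = q := this
      rw [h5.1] at h7
      omega
    exact hcyc (by omega)
  -- bound q above
  have hqhigh : q ≤ B + 1 := by
    by_contra hcon
    push_neg at hcon
    have hq : z' q = Theta q := houtp q (Or.inr (by omega))
    have hTq : q - 1 ≤ Theta q := by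
      rcases Theta_cases q with h | h <;> omega
    have hzp : z' p ≤ B := by
      by_cases hc : z' p = Theta p
      · have : Theta p ≤ p + 1 := by rcases Theta_cases p with h | h <;> omega
        omega
      · have := hB p hc
        omega
    omega
  simp only [Set.mem_prod, Set.mem_Icc]
  omega

lemma conj_FZ {v : Equiv.Perm ℤ} (hv : v ∈ SInf) : v⁻¹ * Theta * v ∈ FZ := by
  refine ⟨?_, ?_, ?_⟩
  · calc (v⁻¹ * Theta * v) * (v⁻¹ * Theta * v)
        = v⁻¹ * Theta * (v * v⁻¹) * Theta * v := by group
      _ = v⁻¹ * (Theta * Theta) * v := by group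
      _ = 1 := by rw [Theta_mul_self]; group
  · intro x
    simp only [Equiv.Perm.mul_apply]
    intro hc
    have : Theta (v x) = v x := by
      have := congrArg v hc
      simpa using this
    exact Theta_ne _ this
  · have hsupp : {x : ℤ | (v⁻¹ * Theta * v) x ≠ Theta x} ⊆
        {x : ℤ | v x ≠ x} ∪ (fun x => Theta x) ⁻¹' {x : ℤ | v x ≠ x} := by
      intro x hx
      simp only [Set.mem_setOf_eq, Equiv.Perm.mul_apply] at hx
      by_contra hc
      simp only [Set.mem_union, Set.mem_preimage, Set.mem_setOf_eq, not_or, not_not] at hc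
      apply hx
      rw [hc.1]
      have h2 : v (Theta x) = Theta x := hc.2
      have h3 : v⁻¹ (Theta x) = Theta x := by
        conv_lhs => rw [← h2]
        simp
      exact h3
    exact ((hv.1.union (hv.1.preimage (fun a _ b _ h => Theta.injective h)))).subset hsupp

end FpfAux

namespace FpfAux

lemma SInf_fix {v : Equiv.Perm ℤ} (hv : v ∈ SInf) {x : ℤ} (hx : x ≤ 0) : v x = x := by
  by_contra hc
  have := hv.2 x hc
  omega

lemma SInf_pos {v : Equiv.Perm ℤ} (hv : v ∈ SInf) {x : ℤ} (hx : 0 < x) : 0 < v x := by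
  by_contra hc
  push_neg at hc
  have h1 : v (v x) = v x := SInf_fix hv hc
  have := v.injective h1
  omega

lemma swap_lt {i a b : ℤ} (hab : a < b) (hne : ¬(a = i ∧ b = i + 1)) :
    Equiv.swap i (i+1) a < Equiv.swap i (i+1) b := by
  simp only [Equiv.swap_apply_def]
  split_ifs <;> omega

lemma mul_swap_SInf {v : Equiv.Perm ℤ} (hv : v ∈ SInf) {i : ℤ} (hi : 1 ≤ i) :
    v * Equiv.swap i (i+1) ∈ SInf := by
  have hsub : {x : ℤ | (v * Equiv.swap i (i+1)) x ≠ x} ⊆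
      insert i (insert (i+1) {x : ℤ | v x ≠ x}) := by
    intro x hx
    simp only [Set.mem_setOf_eq, Equiv.Perm.mul_apply] at hx
    by_cases h1 : x = i
    · exact Set.mem_insert_iff.mpr (Or.inl h1)
    by_cases h2 : x = i + 1
    · exact Set.mem_insert_of_mem _ (Set.mem_insert_iff.mpr (Or.inl h2))
    · rw [Equiv.swap_apply_of_ne_of_ne h1 h2] at hx
      exact Set.mem_insert_of_mem _ (Set.mem_insert_of_mem _ hx)
  refine ⟨((hv.1.insert (i+1)).insert i).subset hsub, ?_⟩
  intro x hx
  have := hsub hx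
  simp only [Set.mem_insert_iff, Set.mem_setOf_eq] at this
  rcases this with h | h | h
  · omega
  · omega
  · exact hv.2 x h

lemma exists_desc {v : Equiv.Perm ℤ} (hv : v ∈ SInf) (hne : v ≠ 1) :
    ∃ i : ℤ, 1 ≤ i ∧ v (i+1) < v i := by
  by_contra hc
  push_neg at hc
  have hmono : ∀ i : ℤ, v i < v (i + 1) := by
    intro i
    rcases lt_trichotomy i 0 with h | h | h
    · rw [SInf_fix hv (by omega : i ≤ 0)]
      by_cases h2 : i + 1 ≤ 0
      · rw [SInf_fix hv h2]; omega
      · have : (0:ℤ) < i + 1 := by omega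
        have := SInf_pos hv this
        omega
    · subst h
      rw [SInf_fix hv le_rfl]
      exact SInf_pos hv (by norm_num)
    · have h1 := hc i (by omega)
      have h2 : v i ≠ v (i+1) := fun hc2 => by
        have := v.injective hc2
        omega
      omega
  have hchain : ∀ (d : ℕ) (x : ℤ), v x + d ≤ v (x + d) := by
    intro d
    induction d with
    | zero => intro x; simp
    | succ m ihm =>
      intro x
      have h1 := ihm x
      have h2 := hmono (x + m)
      push_cast
      have hxe : (x + ((m:ℤ) + 1)) = (x + (m:ℤ)) + 1 := by ring
      rw [hxe]
      omega
  apply hne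
  ext x
  simp only [Equiv.Perm.one_apply]
  obtain ⟨B, hB0, hB⟩ := SInf_bound hv
  -- v x ≤ x
  have hle : v x ≤ x := by
    set d : ℕ := (B - x).toNat + 1 with hd
    have hxd : B < x + d := by omega
    have hfixd : v (x + d) = x + d := by
      by_contra hcon
      have := hB _ hcon
      omega
    have := hchain d x
    omega
  have hge : x ≤ v x := by
    by_cases hx0 : x ≤ 0
    · rw [SInf_fix hv hx0]
    · set d : ℕ := x.toNat with hd
      have h1 : x - d ≤ 0 := by omega
      have h2 : v (x - d) = x - d := SInf_fix hv h1
      have := hchain d (x - d)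
      rw [h2] at this
      have h3 : x - d + d = x := by omega
      rw [h3] at this
      omega
  omega

lemma lenZ_swap {v : Equiv.Perm ℤ} (hv : v ∈ SInf) {i : ℤ} (hi : 1 ≤ i)
    (hd : v (i+1) < v i) :
    lenZ (v * Equiv.swap i (i+1)) + 1 = lenZ v := by
  set s := Equiv.swap i (i+1) with hs
  have hsapp : ∀ x, (v * s) x = v (s x) := fun x => rfl
  have hss : ∀ x, s (s x) = x := fun x => Equiv.swap_apply_self _ _ x
  have hsi : s i = i + 1 := Equiv.swap_apply_left _ _
  have hsi1 : s (i+1) = i := Equiv.swap_apply_right _ _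
  have hptA : ((i, i+1) : ℤ × ℤ) ∈ InvSet v := ⟨by omega, hd⟩
  have hptA' : ((i, i+1) : ℤ × ℤ) ∉ InvSet (v * s) := by
    rintro ⟨-, h⟩
    dsimp only at h
    rw [hsapp, hsapp, hsi, hsi1] at h
    omega
  have hmap : ∀ p : ℤ × ℤ, p ∈ InvSet (v * s) \ {((i, i+1) : ℤ × ℤ)} →
      (s p.1, s p.2) ∈ InvSet v \ {((i, i+1) : ℤ × ℤ)} := by
    rintro ⟨p1, p2⟩ ⟨⟨h1, h2⟩, h3⟩
    dsimp only at h1 h2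
    simp only [Set.mem_singleton_iff, Prod.mk.injEq, not_and] at h3
    constructor
    · refine ⟨swap_lt h1 (fun hab => h3 hab.1 hab.2), ?_⟩
      dsimp only
      rw [hsapp, hsapp] at h2
      exact h2
    · simp only [Set.mem_singleton_iff, Prod.mk.injEq, not_and]
      intro ha hb
      have hp1 : p1 = i + 1 := by
        have hq := congrArg s ha
        rw [hss p1, hsi] at hq
        exact hq
      have hp2 : p2 = i := by
        have hq := congrArg s hb
        rw [hss p2, hsi1] at hq
        exact hq
      omega
  have hmap' : ∀ p : ℤ × ℤ, p ∈ InvSet v \ {((i, i+1) : ℤ × ℤ)} →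
      (s p.1, s p.2) ∈ InvSet (v * s) \ {((i, i+1) : ℤ × ℤ)} := by
    rintro ⟨p1, p2⟩ ⟨⟨h1, h2⟩, h3⟩
    dsimp only at h1 h2
    simp only [Set.mem_singleton_iff, Prod.mk.injEq, not_and] at h3
    constructor
    · refine ⟨swap_lt h1 (fun hab => h3 hab.1 hab.2), ?_⟩
      dsimp only
      rw [hsapp, hsapp, hss, hss]
      exact h2
    · simp only [Set.mem_singleton_iff, Prod.mk.injEq, not_and]
      intro ha hb
      have hp1 : p1 = i + 1 := by
        have hq := congrArg s ha
        rw [hss p1, hsi] at hq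
        exact hq
      have hp2 : p2 = i := by
        have hq := congrArg s hb
        rw [hss p2, hsi1] at hq
        exact hq
      omega
  have hinj : Function.Injective (fun p : ℤ × ℤ => (s p.1, s p.2)) := by
    rintro ⟨a1, a2⟩ ⟨b1, b2⟩ hab
    simp only [Prod.mk.injEq] at hab ⊢
    exact ⟨s.injective hab.1, s.injective hab.2⟩
  have hseteq : (fun p : ℤ × ℤ => (s p.1, s p.2)) '' (InvSet (v * s) \ {((i, i+1) : ℤ × ℤ)})
      = InvSet v \ {((i, i+1) : ℤ × ℤ)} := by
    apply Set.Subset.antisymm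
    · rintro q ⟨p, hp, rfl⟩
      exact hmap p hp
    · intro q hq
      refine ⟨(s q.1, s q.2), hmap' q hq, ?_⟩
      simp [hss]
  have hfin : (InvSet v).Finite := InvSet_finite hv
  have hcard1 : (InvSet (v * s) \ {((i, i+1) : ℤ × ℤ)}).ncard
      = (InvSet v \ {((i, i+1) : ℤ × ℤ)}).ncard := by
    rw [← hseteq, Set.ncard_image_of_injective _ hinj]
  have hcard2 : (InvSet (v * s)).ncard = (InvSet (v * s) \ {((i, i+1) : ℤ × ℤ)}).ncard := by
    rw [Set.diff_singleton_eq_self hptA']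
  have hcard3 : (InvSet v \ {((i, i+1) : ℤ × ℤ)}).ncard + 1 = (InvSet v).ncard :=
    Set.ncard_diff_singleton_add_one hptA hfin
  unfold lenZ
  omega

end FpfAux

namespace FpfAux

lemma swap_mul_self' (i : ℤ) : Equiv.swap i (i+1) * Equiv.swap i (i+1) = 1 :=
  Equiv.swap_mul_self _ _

lemma swap_conj_FZ {z' : Equiv.Perm ℤ} (hz' : z' ∈ FZ) (i : ℤ) :
    Equiv.swap i (i+1) * z' * Equiv.swap i (i+1) ∈ FZ := by
  set s := Equiv.swap i (i+1) with hs
  have hss : ∀ x, s (s x) = x := fun x => Equiv.swap_apply_self _ _ x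
  refine ⟨?_, ?_, ?_⟩
  · have h2 : s * s = 1 := by rw [hs]; exact Equiv.swap_mul_self _ _
    calc (s * z' * s) * (s * z' * s) = s * z' * (s * s) * z' * s := by group
      _ = s * (z' * z') * s := by rw [h2]; group
      _ = 1 := by rw [hz'.1, mul_one, h2]
  · intro x
    simp only [Equiv.Perm.mul_apply]
    intro hc
    have h1 : z' (s x) = s x := by
      have := congrArg s hc
      rw [hss] at this
      exact this
    exact hz'.2.1 _ h1
  · have hsub : {x : ℤ | (s * z' * s) x ≠ Theta x} ⊆
        insert i (insert (i+1) (insert (z'.symm i) (insert (z'.symm (i+1))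
          {x : ℤ | z' x ≠ Theta x}))) := by
      intro x hx
      simp only [Set.mem_setOf_eq, Equiv.Perm.mul_apply] at hx
      simp only [Set.mem_insert_iff, Set.mem_setOf_eq]
      by_cases h1 : x = i
      · exact Or.inl h1
      by_cases h2 : x = i + 1
      · exact Or.inr (Or.inl h2)
      by_cases h3 : z' x = i
      · refine Or.inr (Or.inr (Or.inl ?_))
        rw [← h3]
        simp
      by_cases h4 : z' x = i + 1
      · refine Or.inr (Or.inr (Or.inr (Or.inl ?_)))
        rw [← h4]
        simp
      · refine Or.inr (Or.inr (Or.inr (Or.inr ?_)))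
        intro hc
        apply hx
        have hx' : s x = x := Equiv.swap_apply_of_ne_of_ne h1 h2
        have hzz : s (z' x) = z' x := Equiv.swap_apply_of_ne_of_ne h3 h4
        rw [hx', hzz, hc]
    exact ((((hz'.2.2.insert _).insert _).insert _).insert _).subset hsub

lemma swap_conj_fix {z' : Equiv.Perm ℤ} (hz' : z' ∈ FZ) {i : ℤ} (h : z' i = i + 1) :
    Equiv.swap i (i+1) * z' * Equiv.swap i (i+1) = z' := by
  set s := Equiv.swap i (i+1) with hs
  have hzi1 : z' (i+1) = i := by
    rw [← h, zzF hz']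
  ext x
  simp only [Equiv.Perm.mul_apply]
  by_cases h1 : x = i
  · rw [h1, show s i = i + 1 from Equiv.swap_apply_left _ _, hzi1,
      show s i = i + 1 from Equiv.swap_apply_left _ _, h]
  by_cases h2 : x = i + 1
  · rw [h2, show s (i+1) = i from Equiv.swap_apply_right _ _, h,
      show s (i+1) = i from Equiv.swap_apply_right _ _, hzi1]
  · rw [hs, Equiv.swap_apply_of_ne_of_ne h1 h2]
    have h3 : z' x ≠ i := by
      intro hc
      have : z' (z' x) = z' i := congrArg z' hc
      rw [zzF hz', h] at this
      exact h2 this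
    have h4 : z' x ≠ i + 1 := by
      intro hc
      have : z' (z' x) = z' (i+1) := congrArg z' hc
      rw [zzF hz', hzi1] at this
      exact h1 this
    exact Equiv.swap_apply_of_ne_of_ne h3 h4

lemma NSet_swap {z' : Equiv.Perm ℤ} (hz' : z' ∈ FZ) {i : ℤ} (hne : z' i ≠ i + 1) :
    (InvSet z' \ CycSet z').ncard ≤
      (InvSet (Equiv.swap i (i+1) * z' * Equiv.swap i (i+1))
        \ CycSet (Equiv.swap i (i+1) * z' * Equiv.swap i (i+1))).ncard + 2 := by
  set s := Equiv.swap i (i+1) with hs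
  set z'' := s * z' * s with hz''
  have hss : ∀ x, s (s x) = x := fun x => Equiv.swap_apply_self _ _ x
  have happ : ∀ x, z'' x = s (z' (s x)) := fun x => rfl
  set E : Set (ℤ × ℤ) := {((i, i+1) : ℤ × ℤ), ((z' (i+1), z' i) : ℤ × ℤ)} with hE
  have hmapsto : ∀ p : ℤ × ℤ, p ∈ (InvSet z' \ CycSet z') \ E →
      (s p.1, s p.2) ∈ InvSet z'' \ CycSet z'' := by
    rintro ⟨p1, p2⟩ ⟨⟨⟨h1, h2⟩, h3⟩, h4⟩
    dsimp only at h1 h2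
    simp only [hE, Set.mem_insert_iff, Set.mem_singleton_iff, Prod.mk.injEq, not_or,
      not_and] at h4
    obtain ⟨h4a, h4b⟩ := h4
    have hcyc : z' p1 ≠ p2 := by
      intro hc
      exact h3 ⟨h1, hc⟩
    constructor
    · refine ⟨swap_lt h1 (fun hab => h4a hab.1 hab.2), ?_⟩
      dsimp only
      rw [happ, happ, hss, hss]
      refine swap_lt h2 ?_
      rintro ⟨ha, hb⟩
      -- z' p2 = i and z' p1 = i + 1  →  p2 = z' i, p1 = z' (i+1)
      have hp2 : p2 = z' i := by
        have := congrArg z' ha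
        rw [zzF hz'] at this
        exact this
      have hp1 : p1 = z' (i+1) := by
        have := congrArg z' hb
        rw [zzF hz'] at this
        exact this
      exact h4b hp1 hp2
    · intro hc
      obtain ⟨-, hc2⟩ := hc
      dsimp only at hc2
      rw [happ, hss] at hc2
      have : z' p1 = p2 := by
        have := congrArg s hc2
        rw [hss, hss] at this
        exact this
      exact hcyc this
  have hinj : Function.Injective (fun p : ℤ × ℤ => (s p.1, s p.2)) := by
    rintro ⟨a1, a2⟩ ⟨b1, b2⟩ hab
    simp only [Prod.mk.injEq] at hab ⊢
    exact ⟨s.injective hab.1, s.injective hab.2⟩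
  have hfinN : (InvSet z' \ CycSet z').Finite := NSet_finite hz'
  have hfinN'' : (InvSet z'' \ CycSet z'').Finite := NSet_finite (swap_conj_FZ hz' i)
  have h5 : ((InvSet z' \ CycSet z') \ E).ncard ≤ (InvSet z'' \ CycSet z'').ncard := by
    rw [← Set.ncard_image_of_injective ((InvSet z' \ CycSet z') \ E) hinj]
    apply Set.ncard_le_ncard _ hfinN''
    rintro q ⟨p, hp, rfl⟩
    exact hmapsto p hp
  have h6 : (InvSet z' \ CycSet z').ncard ≤ ((InvSet z' \ CycSet z') \ E).ncard + 2 := by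
    have h7 : (InvSet z' \ CycSet z') ⊆ ((InvSet z' \ CycSet z') \ E) ∪ E := by
      intro p hp
      by_cases hpe : p ∈ E
      · exact Set.mem_union_right _ hpe
      · exact Set.mem_union_left _ ⟨hp, hpe⟩
    have hEfin : E.Finite := (Set.finite_singleton _).insert _
    have h8 := Set.ncard_union_le ((InvSet z' \ CycSet z') \ E) E
    have h9 := Set.ncard_le_ncard h7 ((hfinN.diff).union hEfin)
    have h10 : E.ncard ≤ 2 := by
      rw [hE]
      apply le_trans (Set.ncard_insert_le _ _)
      simp
    omega
  omega

end FpfAux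

namespace FpfAux

lemma NSet_Theta : InvSet Theta \ CycSet Theta = ∅ := by
  ext ⟨p, q⟩
  simp only [Set.mem_diff, Set.mem_empty_iff_false, iff_false, not_and, not_not]
  rintro ⟨h1, h2⟩
  dsimp only at h1 h2
  have hp := Theta_cases p
  have hq := Theta_cases q
  refine ⟨h1, ?_⟩
  dsimp only
  omega

lemma fpfLen_Theta : fpfLen Theta = 0 := by
  unfold fpfLen
  rw [NSet_Theta]
  simp

lemma conj_one : (1 : Equiv.Perm ℤ)⁻¹ * Theta * 1 = Theta := by group

lemma fpfLen_le_lenZ : ∀ (n : ℕ) (v : Equiv.Perm ℤ), v ∈ SInf → lenZ v ≤ n →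
    fpfLen (v⁻¹ * Theta * v) ≤ lenZ v := by
  intro n
  induction n with
  | zero =>
    intro v hv hlen
    by_cases h1 : v = 1
    · subst h1; rw [conj_one, fpfLen_Theta]; exact Nat.zero_le _
    · exfalso
      obtain ⟨i, hi, hd⟩ := exists_desc hv h1
      have hmem : ((i, i+1) : ℤ×ℤ) ∈ InvSet v := ⟨by omega, hd⟩
      have hpos : 0 < lenZ v := by
        unfold lenZ
        rw [Set.ncard_pos (InvSet_finite hv)]
        exact ⟨_, hmem⟩
      omega
  | succ n ih =>
    intro v hv hlen
    by_cases h1 : v = 1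
    · subst h1; rw [conj_one, fpfLen_Theta]; exact Nat.zero_le _
    · obtain ⟨i, hi, hd⟩ := exists_desc hv h1
      set s := Equiv.swap i (i+1) with hs
      have hv' : v * s ∈ SInf := mul_swap_SInf hv hi
      have hlen' : lenZ (v * s) + 1 = lenZ v := lenZ_swap hv hi hd
      have hIH := ih (v * s) hv' (by omega)
      have hc : (v * s)⁻¹ * Theta * (v * s) = s * (v⁻¹ * Theta * v) * s := by
        rw [mul_inv_rev, show s⁻¹ = s from Equiv.swap_inv _ _]
        group
      by_cases hzi : (v⁻¹ * Theta * v) i = i + 1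
      · rw [hc] at hIH
        have hfix : s * (v⁻¹ * Theta * v) * s = v⁻¹ * Theta * v := by
          rw [hs]
          exact swap_conj_fix (conj_FZ hv) hzi
        rw [hfix] at hIH
        omega
      · have hkey := NSet_swap (conj_FZ hv) hzi
        rw [← hs] at hkey
        rw [hc] at hIH
        unfold fpfLen at *
        omega

end FpfAux

namespace FpfAux
section W0f
variable {z : Equiv.Perm ℤ} (hz : z ∈ FInf)
include hz

lemma w0_inv_class {x y : ℤ} (h : (x, y) ∈ InvSet (w0 z hz)) :
    0 < x ∧ x < y ∧ z y < z x ∧ z y < x ∧ z x ≠ y := by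
  obtain ⟨h1, h2⟩ := h
  dsimp only at h1 h2
  have hx : 0 < x := by
    by_contra hc
    push_neg at hc
    rw [w0_nonpos hz hc] at h2
    by_cases hy : 0 < y
    · have := w0_pos hz hy
      omega
    · push_neg at hy
      rw [w0_nonpos hz hy] at h2
      omega
  have hy : 0 < y := by omega
  have hnex := zne hz x
  have hney := zne hz y
  by_cases hxm : x < z x
  · by_cases hym : y < z y
    · exfalso
      have hiff := cnt_lt_cnt hz ⟨hy, hym⟩ ⟨hx, hxm⟩
      rw [w0_min hz ⟨hx, hxm⟩, w0_min hz ⟨hy, hym⟩] at h2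
      have : cnt z y < cnt z x := by omega
      have := hiff.mp this
      omega
    · have hzym : IsMn z (z y) := zmem_of_nonmin hz hy hym
      rw [w0_min hz ⟨hx, hxm⟩, w0_nonmin hz hy hym] at h2
      have hclt : cnt z (z y) < cnt z x := by omega
      have hzyx : z y < x := (cnt_lt_cnt hz hzym ⟨hx, hxm⟩).mp hclt
      refine ⟨hx, h1, by omega, hzyx, ?_⟩
      intro hc
      have : z y = x := by rw [← hc, zz hz]
      omega
  · by_cases hym : y < z y
    · exfalso
      have hzxm : IsMn z (z x) := zmem_of_nonmin hz hx hxm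
      rw [w0_nonmin hz hx hxm, w0_min hz ⟨hy, hym⟩] at h2
      have hcle : ¬ (cnt z (z x) < cnt z y) := by omega
      have : ¬ (z x < y) := fun hc => hcle ((cnt_lt_cnt hz hzxm ⟨hy, hym⟩).mpr hc)
      omega
    · have hzxm : IsMn z (z x) := zmem_of_nonmin hz hx hxm
      have hzym : IsMn z (z y) := zmem_of_nonmin hz hy hym
      rw [w0_nonmin hz hx hxm, w0_nonmin hz hy hym] at h2
      have hclt : cnt z (z y) < cnt z (z x) := by omega
      have hzyx : z y < z x := (cnt_lt_cnt hz hzym hzxm).mp hclt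
      exact ⟨hx, h1, hzyx, by omega, by omega⟩

lemma two_lenZ_le : 2 * lenZ (w0 z hz) ≤ (InvSet z \ CycSet z).ncard := by
  classical
  have hAfin : (InvSet (w0 z hz)).Finite := InvSet_finite (w0_SInf hz)
  have hNSfin : (InvSet z \ CycSet z).Finite := NSet_finite hz.1
  have hA_NS : InvSet (w0 z hz) ⊆ InvSet z \ CycSet z := by
    rintro ⟨x, y⟩ hp
    obtain ⟨c1, c2, c3, c4, c5⟩ := w0_inv_class hz hp
    exact ⟨⟨c2, c3⟩, fun hc => c5 hc.2⟩
  set φ : ℤ × ℤ → ℤ × ℤ := fun p => (z p.2, z p.1) with hφ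
  have hφinj : Function.Injective φ := by
    rintro ⟨a1, a2⟩ ⟨b1, b2⟩ hab
    simp only [hφ, Prod.mk.injEq] at hab ⊢
    exact ⟨z.injective hab.2, z.injective hab.1⟩
  have hB_NS : φ '' InvSet (w0 z hz) ⊆ InvSet z \ CycSet z := by
    rintro q ⟨⟨x, y⟩, hp, rfl⟩
    obtain ⟨c1, c2, c3, c4, c5⟩ := w0_inv_class hz hp
    refine ⟨⟨c3, ?_⟩, ?_⟩
    · simp only [hφ]
      rw [zz hz, zz hz]
      exact c2
    · rintro ⟨-, hc⟩
      simp only [hφ] at hc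
      rw [zz hz] at hc
      exact c5 hc.symm
  have hdisj : Disjoint (InvSet (w0 z hz)) (φ '' InvSet (w0 z hz)) := by
    rw [Set.disjoint_left]
    rintro ⟨x, y⟩ hp ⟨⟨x', y'⟩, hp', heq⟩
    obtain ⟨c1, c2, c3, c4, c5⟩ := w0_inv_class hz hp
    obtain ⟨d1, d2, d3, d4, d5⟩ := w0_inv_class hz hp'
    simp only [hφ, Prod.mk.injEq] at heq
    obtain ⟨he1, he2⟩ := heq
    -- x = z y', y = z x'
    have hzy : z y = x' := by rw [← he2, zz hz]
    have hzy' : z y' = x := he1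
    omega
  have hunion : (InvSet (w0 z hz) ∪ φ '' InvSet (w0 z hz)).ncard
      = (InvSet (w0 z hz)).ncard + (φ '' InvSet (w0 z hz)).ncard :=
    Set.ncard_union_eq hdisj hAfin (hAfin.image _)
  have himg : (φ '' InvSet (w0 z hz)).ncard = (InvSet (w0 z hz)).ncard :=
    Set.ncard_image_of_injective _ hφinj
  have hsub : InvSet (w0 z hz) ∪ φ '' InvSet (w0 z hz) ⊆ InvSet z \ CycSet z :=
    Set.union_subset hA_NS hB_NS
  have hle := Set.ncard_le_ncard hsub hNSfin
  unfold lenZ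
  omega

lemma w0_AFPF : w0 z hz ∈ AFPF z := by
  refine ⟨w0_SInf hz, w0_conj hz, ?_⟩
  intro v hv hconj
  have h1 := fpfLen_le_lenZ (lenZ v) v hv le_rfl
  rw [← hconj] at h1
  have h2 := two_lenZ_le hz
  unfold fpfLen at h1
  omega

lemma w0_isLexMin : IsLexMinAtom z (w0 z hz) := by
  refine ⟨w0_AFPF hz, ?_⟩
  intro v hv
  exact w0_lexmin hz v hv.1 hv.2.1

omit hz in
lemma lexmin_unique {z' : Equiv.Perm ℤ} {w w' : Equiv.Perm ℤ}
    (h : IsLexMinAtom z' w) (h' : IsLexMinAtom z' w') : w = w' := by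
  rcases h.2 w' h'.1 with h1 | ⟨k, hk0, hklt, hkag⟩
  · exact h1.symm
  rcases h'.2 w h.1 with h2 | ⟨k', hk0', hklt', hkag'⟩
  · exact h2
  exfalso
  rcases lt_trichotomy k k' with hc | hc | hc
  · have := hkag' k hk0 hc
    omega
  · subst hc
    omega
  · have := hkag k' hk0' hc
    omega

end W0f
end FpfAux

namespace FpfAux
section PartD
variable {z : Equiv.Perm ℤ} (hz : z ∈ FInf) {n : ℤ} (hn : 0 < n)
include hz

include hn in
lemma partD : ({i : ℤ | FpfVisDes z i} = {n}) ↔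
    (∃ w : Equiv.Perm ℤ, IsLexMinAtom z w ∧ IsNGrassmannian n w) := by
  constructor
  · intro hset
    have hiff : ∀ i : ℤ, FpfVisDes z i ↔ i = n := fun i => by
      rw [← Set.mem_singleton_iff, ← hset]; rfl
    refine ⟨w0 z hz, w0_isLexMin hz, ?_, ?_⟩
    · intro i hi hine
      have hnd : ¬ FpfVisDes z i := fun hd => hine ((hiff i).mp hd)
      rw [w0_desc_iff hz] at hnd
      push_neg at hnd
      rcases lt_or_eq_of_le hnd with h | h
      · exact h
      · exfalso
        have := (w0 z hz).injective h
        omega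
    · have hdn := (hiff n).mpr rfl
      rw [w0_desc_iff hz] at hdn
      exact hdn
  · rintro ⟨w, hlex, hgr⟩
    have hw : w = w0 z hz := lexmin_unique hlex (w0_isLexMin hz)
    subst hw
    ext i
    simp only [Set.mem_setOf_eq, Set.mem_singleton_iff]
    constructor
    · intro hd
      have hi := desc_pos hz hd
      by_contra hne
      have := hgr.1 i hi hne
      rw [w0_desc_iff hz] at hd
      omega
    · intro hin
      rw [hin, w0_desc_iff hz]
      exact hgr.2

end PartD
end FpfAux

/-- four equivalent characterizations of the elements of `F_∞`
whose unique FPF-visible descent is `n`. -/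
theorem fpf_grassmannian_tfae (z : Equiv.Perm ℤ) (hz : z ∈ FInf) (n : ℤ) (hn : 0 < n) :
    (({i : ℤ | FpfVisDes z i} = {n}) ↔
      (fpfCode z 1 = 0 ∧
        (∀ i : ℤ, 2 ≤ i → i + 1 ≤ n → fpfCode z i ≤ fpfCode z (i + 1)) ∧
        fpfCode z n ≠ 0 ∧
        (∀ i : ℤ, n < i → fpfCode z i = 0))) ∧
    (({i : ℤ | FpfVisDes z i} = {n}) ↔
      ((EssSet (DhatFPF z)).Nonempty ∧ ∀ p ∈ EssSet (DhatFPF z), p.1 = n)) ∧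
    (({i : ℤ | FpfVisDes z i} = {n}) ↔
      (∃ w : Equiv.Perm ℤ, IsLexMinAtom z w ∧ IsNGrassmannian n w)) :=
  ⟨FpfAux.partB hz hn, FpfAux.partC hz hn, FpfAux.partD hz hn⟩
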